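/- Let a, b, c be nonnegative reals satisfying a ≤ b + c, c ≤ a + b, and 2b ≤ 2a + c. Define p_1(t) = (1/6)(1 + e^{-at} − e^{-bt} − e^{-ct}), p_2(t) = (1/6)(1 − e^{-at} − e^{-bt} + e^{-ct}), p_3(t) = (1/6)(1 − 2e^{-at} + 2e^{-bt} − e^{-ct}). Then p_1(t) ≥ 0, p_2(t) ≥ 0, and p_3(t) ≥ 0 for all t ≥ 0. -/
import Mathlib
set_option maxHeartbeats 1000000


theorem stmt4 (a b c : ℝ) (ha : 0 ≤ a) (hb : 0 ≤ b) (hc : 0 ≤ c)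
    (h1 : a ≤ b + c) (h2 : c ≤ a + b) (h3 : 2 * b ≤ 2 * a + c) (t : ℝ) (ht : 0 ≤ t) :
    0 ≤ (1/6 : ℝ) * (1 + Real.exp (-a*t) - Real.exp (-b*t) - Real.exp (-c*t)) ∧
    0 ≤ (1/6 : ℝ) * (1 - Real.exp (-a*t) - Real.exp (-b*t) + Real.exp (-c*t)) ∧
    0 ≤ (1/6 : ℝ) * (1 - 2*Real.exp (-a*t) + 2*Real.exp (-b*t) - Real.exp (-c*t)) := by
  set x := Real.exp (-a*t) with hxdef
  set y := Real.exp (-b*t) with hydef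
  set z := Real.exp (-c*t) with hzdef
  set u := Real.exp (-(c/2)*t) with hudef
  have hx0 : 0 < x := Real.exp_pos _
  have hy0 : 0 < y := Real.exp_pos _
  have hz0 : 0 < z := Real.exp_pos _
  have hu0 : 0 < u := Real.exp_pos _
  have hx1 : x ≤ 1 := Real.exp_le_one_iff.2 (by nlinarith)
  have hy1 : y ≤ 1 := Real.exp_le_one_iff.2 (by nlinarith)
  have hz1 : z ≤ 1 := Real.exp_le_one_iff.2 (by nlinarith)
  have hu1 : u ≤ 1 := Real.exp_le_one_iff.2 (by nlinarith)
  have e1 : y * z ≤ x := by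
    rw [hxdef, hydef, hzdef, ← Real.exp_add]
    exact Real.exp_le_exp.2 (by nlinarith)
  have e2 : x * y ≤ z := by
    rw [hxdef, hydef, hzdef, ← Real.exp_add]
    exact Real.exp_le_exp.2 (by nlinarith)
  have e3 : x * u ≤ y := by
    rw [hxdef, hydef, hudef, ← Real.exp_add]
    exact Real.exp_le_exp.2 (by nlinarith)
  have e4 : x * x ≤ u := by
    rw [hxdef, hudef, ← Real.exp_add]
    exact Real.exp_le_exp.2 (by nlinarith)
  have e5 : u * u = z := by
    rw [hudef, hzdef, ← Real.exp_add]
    ring_nf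
  have k1 : 0 ≤ 1 + x - y - z := by nlinarith [mul_nonneg (sub_nonneg.2 hy1) (sub_nonneg.2 hz1)]
  have k2 : 0 ≤ 1 - x - y + z := by nlinarith [mul_nonneg (sub_nonneg.2 hx1) (sub_nonneg.2 hy1)]
  have k3 : 0 ≤ 1 - 2*x + 2*y - z := by
    have h5 : 0 ≤ (1 - u) * (1 + u - 2*x) :=
      mul_nonneg (by linarith) (by nlinarith [sq_nonneg (1 - x)])
    nlinarith
  exact ⟨by linarith, by linarith, by linarith⟩
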